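/- Any r-robust graph on 2r−1 vertices has at least 3r(r−1)/2 edges. -/

import Mathlib

variable {V : Type*}

def rReachable [Fintype V] [DecidableEq V] (G : SimpleGraph V) [DecidableRel G.Adj]
    (S : Finset V) (r : ℕ) : Prop :=
  ∃ i ∈ S, r ≤ (G.neighborFinset i \ S).card

def rRobust [Fintype V] [DecidableEq V] (G : SimpleGraph V) [DecidableRel G.Adj]
    (r : ℕ) : Prop :=
  ∀ S₁ S₂ : Finset V, S₁.Nonempty → S₂.Nonempty → Disjoint S₁ S₂ →
    rReachable G S₁ r ∨ rReachable G S₂ r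

section Aux

variable [Fintype V] [DecidableEq V]

/-- In an r-robust graph on 2r-1 vertices, every nonempty set of at most r-1
vertices is r-reachable. -/
lemma small_reachable (G : SimpleGraph V) [DecidableRel G.Adj] (r : ℕ)
    (hcard : Fintype.card V = 2 * r - 1) (hr : 1 ≤ r) (hrob : rRobust G r)
    (S : Finset V) (hS : S.Nonempty) (hSc : S.card ≤ r - 1) :
    ∃ v ∈ S, r ≤ (G.neighborFinset v \ S).card := by
  have hT : (Finset.univ \ S).Nonempty := by
    rw [← Finset.card_pos, Finset.card_univ_diff]
    omega
  have hdisj : Disjoint S (Finset.univ \ S) := Finset.disjoint_sdiff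
  rcases hrob S (Finset.univ \ S) hS hT hdisj with h1 | h2
  · exact h1
  · exfalso
    obtain ⟨u, hu, hru⟩ := h2
    have hsub : G.neighborFinset u \ (Finset.univ \ S) ⊆ S := by
      intro w hw
      rw [Finset.mem_sdiff] at hw
      by_contra hws
      exact hw.2 (Finset.mem_sdiff.mpr ⟨Finset.mem_univ w, hws⟩)
    have := Finset.card_le_card hsub
    omega

/-- Splitting the outside of `S` into `G`-neighbors and `Gᶜ`-neighbors of `v ∈ S`. -/
lemma compl_out_card (G : SimpleGraph V) [DecidableRel G.Adj] (S : Finset V) (v : V)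
    (hv : v ∈ S) :
    (G.neighborFinset v \ S).card + (Gᶜ.neighborFinset v \ S).card
      = Fintype.card V - S.card := by
  have hU : (G.neighborFinset v \ S) ∪ (Gᶜ.neighborFinset v \ S) = Finset.univ \ S := by
    ext w
    simp only [Finset.mem_union, Finset.mem_sdiff, SimpleGraph.mem_neighborFinset,
      SimpleGraph.compl_adj, Finset.mem_univ, true_and]
    constructor
    · rintro (⟨_, hw⟩ | ⟨_, hw⟩) <;> exact hw
    · intro hw
      have hne : v ≠ w := fun h => hw (h ▸ hv)
      by_cases hadj : G.Adj v w
      · exact Or.inl ⟨hadj, hw⟩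
      · exact Or.inr ⟨⟨hne, hadj⟩, hw⟩
  have hdisj : Disjoint (G.neighborFinset v \ S) (Gᶜ.neighborFinset v \ S) := by
    rw [Finset.disjoint_left]
    intro a ha hb
    rw [Finset.mem_sdiff, SimpleGraph.mem_neighborFinset] at ha hb
    exact hb.1.2 ha.1
  rw [← Finset.card_union_of_disjoint hdisj, hU, Finset.card_univ_diff]

/-- The peeling argument: if from every nonempty set `S` of size at most `m+1`
we can remove a vertex with few `H`-neighbors outside `S`, then the number of
`H`-edges touching a set of size `k` is at most `∑ i < k, (m - i)`. -/
lemma chain_bound (H : SimpleGraph V) [DecidableRel H.Adj] (m : ℕ)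
    (hstep : ∀ S : Finset V, S.Nonempty → S.card ≤ m + 1 →
      ∃ v ∈ S, (H.neighborFinset v \ S).card + S.card ≤ m + 1) :
    ∀ k, k ≤ m + 1 → ∀ S : Finset V, S.card = k →
      (H.edgeFinset.filter (fun e => ∃ v ∈ S, v ∈ e)).card
        ≤ ∑ i ∈ Finset.range k, (m - i) := by
  intro k
  induction k with
  | zero =>
    intro _ S hS
    have hSe : S = ∅ := Finset.card_eq_zero.mp hS
    subst hSe
    simp
  | succ k ih =>
    intro hk S hScard
    have hne : S.Nonempty := Finset.card_pos.mp (by omega)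
    obtain ⟨v, hvS, hvcard⟩ := hstep S hne (by omega)
    set S' := S.erase v with hS'def
    have hS'card : S'.card = k := by
      rw [hS'def, Finset.card_erase_of_mem hvS, hScard]
      omega
    have hsub : H.edgeFinset.filter (fun e => ∃ u ∈ S, u ∈ e) ⊆
        (H.edgeFinset.filter (fun e => ∃ u ∈ S', u ∈ e)) ∪
        (H.neighborFinset v \ S).image (fun w => s(v, w)) := by
      intro e he
      revert he
      induction e using Sym2.ind with
      | _ x y =>
        intro he
        obtain ⟨heE, hex0⟩ := Finset.mem_filter.mp he
        obtain ⟨u, huS, hue⟩ := hex0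
        have hadj : H.Adj x y := by
          rwa [SimpleGraph.mem_edgeFinset, SimpleGraph.mem_edgeSet] at heE
        by_cases hex : x ∈ S' ∨ y ∈ S'
        · apply Finset.mem_union_left
          refine Finset.mem_filter.mpr ⟨heE, ?_⟩
          rcases hex with hx | hy
          · exact ⟨x, hx, Sym2.mem_iff.mpr (Or.inl rfl)⟩
          · exact ⟨y, hy, Sym2.mem_iff.mpr (Or.inr rfl)⟩
        · push_neg at hex
          apply Finset.mem_union_right
          rcases Sym2.mem_iff.mp hue with rfl | rfl
          · -- u = x
            have hxv : u = v := by
              by_contra hne'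
              exact hex.1 (Finset.mem_erase.mpr ⟨hne', huS⟩)
            subst hxv
            refine Finset.mem_image.mpr ⟨y, ?_, rfl⟩
            rw [Finset.mem_sdiff, SimpleGraph.mem_neighborFinset]
            refine ⟨hadj, fun hyS => ?_⟩
            exact hex.2 (Finset.mem_erase.mpr ⟨(H.ne_of_adj hadj).symm, hyS⟩)
          · -- u = y
            have hyv : u = v := by
              by_contra hne'
              exact hex.2 (Finset.mem_erase.mpr ⟨hne', huS⟩)
            subst hyv
            refine Finset.mem_image.mpr ⟨x, ?_, Sym2.eq_swap⟩
            rw [Finset.mem_sdiff, SimpleGraph.mem_neighborFinset]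
            refine ⟨hadj.symm, fun hxS => ?_⟩
            exact hex.1 (Finset.mem_erase.mpr ⟨H.ne_of_adj hadj, hxS⟩)
    calc (H.edgeFinset.filter (fun e => ∃ u ∈ S, u ∈ e)).card
        ≤ ((H.edgeFinset.filter (fun e => ∃ u ∈ S', u ∈ e)) ∪
            (H.neighborFinset v \ S).image (fun w => s(v, w))).card :=
          Finset.card_le_card hsub
      _ ≤ (H.edgeFinset.filter (fun e => ∃ u ∈ S', u ∈ e)).card +
            ((H.neighborFinset v \ S).image (fun w => s(v, w))).card :=
          Finset.card_union_le _ _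
      _ ≤ (∑ i ∈ Finset.range k, (m - i)) + (m - k) := by
          refine add_le_add (ih (by omega) S' hS'card) ?_
          refine le_trans (Finset.card_image_le) ?_
          omega
      _ = ∑ i ∈ Finset.range (k + 1), (m - i) := (Finset.sum_range_succ _ _).symm

end Aux

theorem stmt_6 [Fintype V] [DecidableEq V] (G : SimpleGraph V) [DecidableRel G.Adj]
    (r : ℕ) (hr : 1 ≤ r) (hcard : Fintype.card V = 2 * r - 1)
    (h : rRobust G r) : 3 * r * (r - 1) / 2 ≤ G.edgeFinset.card := by
  rcases Nat.lt_or_ge r 2 with hr2 | hr2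
  · interval_cases r
    simp
  obtain ⟨m, rfl⟩ : ∃ m, r = m + 2 := ⟨r - 2, by omega⟩
  -- a maximum clique I
  obtain ⟨I, hIclique, hImax⟩ : ∃ I : Finset V, (∀ x ∈ I, ∀ y ∈ I, x ≠ y → G.Adj x y) ∧
      ∀ J : Finset V, (∀ x ∈ J, ∀ y ∈ J, x ≠ y → G.Adj x y) → J.card ≤ I.card := by
    obtain ⟨I, hI, hmax⟩ := Finset.exists_max_image
      (Finset.univ.filter (fun s : Finset V => ∀ x ∈ s, ∀ y ∈ s, x ≠ y → G.Adj x y))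
      Finset.card ⟨∅, by simp⟩
    exact ⟨I, by simpa using (Finset.mem_filter.mp hI).2,
      fun J hJ => hmax J (Finset.mem_filter.mpr ⟨Finset.mem_univ J, hJ⟩)⟩
  -- the maximum clique has at least r = m+2 vertices
  have hIcard : m + 2 ≤ I.card := by
    by_contra hlt
    push_neg at hlt
    have hsub0 : m + 1 ≤ (Finset.univ \ I).card := by
      rw [Finset.card_univ_diff]
      omega
    obtain ⟨S, hSsub, hScard⟩ := Finset.exists_subset_card_eq (s := Finset.univ \ I) (n := m + 1) hsub0
    have hSne : S.Nonempty := Finset.card_pos.mp (by omega)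
    obtain ⟨v, hvS, hvr⟩ := small_reachable G (m + 2) hcard (by omega) h S hSne (by omega)
    have hvI : v ∉ I := fun hvI => (Finset.mem_sdiff.mp (hSsub hvS)).2 hvI
    have hw : ∃ w ∈ I, w ≠ v ∧ ¬ G.Adj v w := by
      by_contra hcon
      push_neg at hcon
      have hstep : ∀ x ∈ insert v I, ∀ y ∈ insert v I, x ≠ y → G.Adj x y := by
        intro x hx y hy hxy
        rcases Finset.mem_insert.mp hx with rfl | hxI
        · rcases Finset.mem_insert.mp hy with rfl | hyI
          · exact absurd rfl hxy
          · exact hcon y hyI (Ne.symm hxy)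
        · rcases Finset.mem_insert.mp hy with rfl | hyI
          · exact (hcon x hxI hxy).symm
          · exact hIclique x hxI y hyI hxy
      have hle := hImax _ hstep
      rw [Finset.card_insert_of_notMem hvI] at hle
      omega
    obtain ⟨w, hwI, hwv, hwn⟩ := hw
    have hwS : w ∉ S := fun hwS => (Finset.mem_sdiff.mp (hSsub hwS)).2 hwI
    have hsub2 : G.neighborFinset v \ S ⊆ (Finset.univ \ S).erase w := by
      intro u hu
      rw [Finset.mem_sdiff, SimpleGraph.mem_neighborFinset] at hu
      exact Finset.mem_erase.mpr ⟨fun hueq => hwn (hueq ▸ hu.1),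
        Finset.mem_sdiff.mpr ⟨Finset.mem_univ u, hu.2⟩⟩
    have hc2 := Finset.card_le_card hsub2
    rw [Finset.card_erase_of_mem (Finset.mem_sdiff.mpr ⟨Finset.mem_univ w, hwS⟩),
      Finset.card_univ_diff] at hc2
    omega
  -- a clique R with exactly m+2 vertices and its complement S₀
  obtain ⟨R, hRsub, hRcard⟩ := Finset.exists_subset_card_eq (s := I) (n := m + 2) hIcard
  have hS0card : (Finset.univ \ R).card = m + 1 := by
    rw [Finset.card_univ_diff, hRcard]
    omega
  -- the step hypothesis for the complement graph
  have hstep : ∀ T : Finset V, T.Nonempty → T.card ≤ m + 1 →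
      ∃ v ∈ T, (Gᶜ.neighborFinset v \ T).card + T.card ≤ m + 1 := by
    intro T hTne hTcard
    obtain ⟨v, hvT, hvr⟩ := small_reachable G (m + 2) hcard (by omega) h T hTne (by omega)
    refine ⟨v, hvT, ?_⟩
    have hco := compl_out_card G T v hvT
    omega
  have hchain := chain_bound Gᶜ m hstep (m + 1) le_rfl (Finset.univ \ R) hS0card
  -- every edge of the complement touches S₀ = univ \ R
  have hHcard : Gᶜ.edgeFinset.card ≤ ∑ i ∈ Finset.range (m + 1), (m - i) := by
    refine le_trans (Finset.card_le_card ?_) hchain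
    intro e he
    revert he
    induction e using Sym2.ind with
    | _ x y =>
      intro he
      refine Finset.mem_filter.mpr ⟨he, ?_⟩
      rw [SimpleGraph.mem_edgeFinset, SimpleGraph.mem_edgeSet, SimpleGraph.compl_adj] at he
      by_cases hx : x ∈ R
      · by_cases hy : y ∈ R
        · exact absurd (hIclique x (hRsub hx) y (hRsub hy) he.1) he.2
        · exact ⟨y, Finset.mem_sdiff.mpr ⟨Finset.mem_univ y, hy⟩,
            Sym2.mem_iff.mpr (Or.inr rfl)⟩
      · exact ⟨x, Finset.mem_sdiff.mpr ⟨Finset.mem_univ x, hx⟩,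
          Sym2.mem_iff.mpr (Or.inl rfl)⟩
  -- evaluate the sum
  have hsum : (∑ i ∈ Finset.range (m + 1), (m - i)) = ∑ i ∈ Finset.range (m + 1), i := by
    rw [← Finset.sum_range_reflect (fun i => m - i) (m + 1)]
    refine Finset.sum_congr rfl ?_
    intro i hi
    rw [Finset.mem_range] at hi
    omega
  have hsum2 : (∑ i ∈ Finset.range (m + 1), (m - i)) * 2 = (m + 1) * m := by
    rw [hsum, Finset.sum_range_id_mul_two, Nat.add_sub_cancel]
  -- total number of edges in G plus Gᶜ
  have hdisjE : Disjoint G.edgeFinset Gᶜ.edgeFinset :=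
    SimpleGraph.disjoint_edgeFinset.mpr disjoint_compl_right
  have hunion : G.edgeFinset ∪ Gᶜ.edgeFinset = (⊤ : SimpleGraph V).edgeFinset := by
    ext e
    revert e
    refine Sym2.ind ?_
    intro x y
    simp only [Finset.mem_union, SimpleGraph.mem_edgeFinset, SimpleGraph.mem_edgeSet,
      SimpleGraph.compl_adj, SimpleGraph.top_adj]
    constructor
    · rintro (hxy | ⟨hne, _⟩)
      · exact G.ne_of_adj hxy
      · exact hne
    · intro hne
      by_cases hadj : G.Adj x y
      · exact Or.inl hadj
      · exact Or.inr ⟨hne, hadj⟩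
  have htot : G.edgeFinset.card + Gᶜ.edgeFinset.card = (Fintype.card V).choose 2 := by
    rw [← SimpleGraph.card_edgeFinset_top_eq_card_choose_two, ← hunion,
      Finset.card_union_of_disjoint hdisjE]
  have hchoose : (Fintype.card V).choose 2 = (2 * m + 3) * (m + 1) := by
    have hV : Fintype.card V = 2 * m + 3 := by omega
    rw [hV, Nat.choose_two_right]
    have hprod : (2 * m + 3) * (2 * m + 3 - 1) = ((2 * m + 3) * (m + 1)) * 2 := by
      rw [show 2 * m + 3 - 1 = 2 * (m + 1) by omega]
      ring
    rw [hprod, Nat.mul_div_cancel _ (by norm_num)]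
  -- final arithmetic
  have hiden : 2 * ((2 * m + 3) * (m + 1)) = 3 * (m + 2) * (m + 1) + (m + 1) * m := by
    ring
  have hHle : 2 * Gᶜ.edgeFinset.card ≤ (m + 1) * m := by
    calc 2 * Gᶜ.edgeFinset.card ≤ 2 * ∑ i ∈ Finset.range (m + 1), (m - i) := by omega
      _ = (m + 1) * m := by rw [mul_comm]; exact hsum2
  have hmain : 3 * (m + 2) * (m + 1) ≤ 2 * G.edgeFinset.card := by
    rw [hchoose] at htot
    linarith
  have hfin : 3 * (m + 2) * (m + 1) / 2 ≤ (2 * G.edgeFinset.card) / 2 :=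
    Nat.div_le_div_right hmain
  rw [Nat.mul_div_cancel_left _ (by norm_num : 0 < 2)] at hfin
  have hrw : m + 2 - 1 = m + 1 := rfl
  calc 3 * (m + 2) * (m + 2 - 1) / 2 = 3 * (m + 2) * (m + 1) / 2 := by rw [hrw]
    _ ≤ G.edgeFinset.card := hfin
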